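/- In the tightness instance with 0 < ε < 1: two i.i.d. boxes with value 1/ε with probability ε (free inspection) and one deterministic box of value 1 (inspection cost 1), the quantity (1/2)·E[max_i (X_i − c_i)^+] equals 1 − ε/2, which is strictly less than max_i E[X_i] = 1. -/

import Mathlib

open MeasureTheory ProbabilityTheory

theorem stmt_13 {Ω : Type*} [MeasurableSpace Ω] (μ : Measure Ω)
    [IsProbabilityMeasure μ] (ε : ℝ) (hε0 : 0 < ε) (hε1 : ε < 1)
    (X : Fin 3 → Ω → ℝ) (c : Fin 3 → ℝ) (hc : c = ![0, 0, 1])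
    (hmeas : ∀ i, Measurable (X i))
    (hdet : ∀ ω, X 2 ω = 1)
    (hval0 : ∀ ω, X 0 ω = 1 / ε ∨ X 0 ω = 0)
    (hval1 : ∀ ω, X 1 ω = 1 / ε ∨ X 1 ω = 0)
    (hp0 : μ {ω | X 0 ω = 1 / ε} = ENNReal.ofReal ε)
    (hp1 : μ {ω | X 1 ω = 1 / ε} = ENNReal.ofReal ε)
    (hind : IndepFun (X 0) (X 1) μ) :
    (1 / 2) * ∫ ω, (⨆ i, max (X i ω - c i) 0) ∂μ = 1 - ε / 2 ∧
    1 - ε / 2 < 1 ∧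
    ∀ i, ∫ ω, X i ω ∂μ = 1 := by
  have hεne : ε ≠ 0 := ne_of_gt hε0
  have hinv : (0:ℝ) < 1 / ε := by positivity
  set A : Set Ω := X 0 ⁻¹' {1/ε} with hA
  set B : Set Ω := X 1 ⁻¹' {1/ε} with hB
  have hAm : MeasurableSet A := (hmeas 0) (measurableSet_singleton _)
  have hBm : MeasurableSet B := (hmeas 1) (measurableSet_singleton _)
  have hμA : μ A = ENNReal.ofReal ε := hp0
  have hμB : μ B = ENNReal.ofReal ε := hp1
  have hc0 : c 0 = 0 := by simp [hc]
  have hc1 : c 1 = 0 := by simp [hc]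
  have hc2 : c 2 = 1 := by simp [hc]
  have hX0 : X 0 = Set.indicator A (fun _ => 1/ε) := by
    funext ω
    rcases hval0 ω with h | h
    · have hm : ω ∈ A := h
      rw [Set.indicator_of_mem hm, h]
    · have hm : ω ∉ A := by
        intro hm
        have : X 0 ω = 1/ε := hm
        rw [this] at h; exact absurd h (ne_of_gt hinv)
      rw [Set.indicator_of_notMem hm, h]
  have hX1 : X 1 = Set.indicator B (fun _ => 1/ε) := by
    funext ω
    rcases hval1 ω with h | h
    · have hm : ω ∈ B := h
      rw [Set.indicator_of_mem hm, h]
    · have hm : ω ∉ B := by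
        intro hm
        have : X 1 ω = 1/ε := hm
        rw [this] at h; exact absurd h (ne_of_gt hinv)
      rw [Set.indicator_of_notMem hm, h]
  have hsup : ∀ ω, (⨆ i, max (X i ω - c i) 0) = Set.indicator (A ∪ B) (fun _ => 1/ε) ω := by
    intro ω
    have hbdd : BddAbove (Set.range fun i => max (X i ω - c i) 0) :=
      Set.Finite.bddAbove (Set.finite_range _)
    by_cases hmem : ω ∈ A ∪ B
    · rw [Set.indicator_of_mem hmem]
      apply le_antisymm
      · apply ciSup_le
        intro i
        fin_cases i
        · show max (X 0 ω - c 0) 0 ≤ 1/ε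
          rw [hc0, sub_zero]
          apply max_le _ hinv.le
          rcases hval0 ω with h | h <;> rw [h]
          exact hinv.le
        · show max (X 1 ω - c 1) 0 ≤ 1/ε
          rw [hc1, sub_zero]
          apply max_le _ hinv.le
          rcases hval1 ω with h | h <;> rw [h]
          exact hinv.le
        · show max (X 2 ω - c 2) 0 ≤ 1/ε
          rw [hc2, hdet ω]
          norm_num
          positivity
      · rcases hmem with h | h
        · have hx : X 0 ω = 1/ε := h
          calc (1:ℝ)/ε = max (X 0 ω - c 0) 0 := by
                rw [hx, hc0, sub_zero, max_eq_left hinv.le]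
            _ ≤ _ := le_ciSup hbdd 0
        · have hx : X 1 ω = 1/ε := h
          calc (1:ℝ)/ε = max (X 1 ω - c 1) 0 := by
                rw [hx, hc1, sub_zero, max_eq_left hinv.le]
            _ ≤ _ := le_ciSup hbdd 1
    · rw [Set.indicator_of_notMem hmem]
      have h0 : ω ∉ A := fun h => hmem (Or.inl h)
      have h1 : ω ∉ B := fun h => hmem (Or.inr h)
      have hx0 : X 0 ω = 0 := (hval0 ω).resolve_left h0
      have hx1 : X 1 ω = 0 := (hval1 ω).resolve_left h1
      apply le_antisymm
      · apply ciSup_le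
        intro i
        fin_cases i
        · show max (X 0 ω - c 0) 0 ≤ 0
          rw [hc0, hx0]; simp
        · show max (X 1 ω - c 1) 0 ≤ 0
          rw [hc1, hx1]; simp
        · show max (X 2 ω - c 2) 0 ≤ 0
          rw [hc2, hdet ω]; simp
      · calc (0:ℝ) ≤ max (X 0 ω - c 0) 0 := le_max_right _ _
          _ ≤ _ := le_ciSup hbdd 0
  have hμAB : μ (A ∩ B) = ENNReal.ofReal ε * ENNReal.ofReal ε := by
    rw [hA, hB, hind.measure_inter_preimage_eq_mul _ _
      (measurableSet_singleton _) (measurableSet_singleton _), ← hA, ← hB, hμA, hμB]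
  have hμU : μ (A ∪ B) = ENNReal.ofReal (2*ε - ε^2) := by
    have h := measure_union_add_inter A hBm (μ := μ)
    rw [hμAB, hμA, hμB] at h
    have h2 : ENNReal.ofReal (2*ε - ε^2) + ENNReal.ofReal ε * ENNReal.ofReal ε
        = ENNReal.ofReal ε + ENNReal.ofReal ε := by
      rw [← ENNReal.ofReal_mul hε0.le, ← ENNReal.ofReal_add (by nlinarith) (by nlinarith),
        ← ENNReal.ofReal_add hε0.le hε0.le]
      ring_nf
    have hfin : ENNReal.ofReal ε * ENNReal.ofReal ε ≠ ⊤ := by finiteness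
    exact WithTop.add_right_cancel hfin (h.trans h2.symm)
  have hUm : MeasurableSet (A ∪ B) := hAm.union hBm
  have hint : ∫ ω, (⨆ i, max (X i ω - c i) 0) ∂μ = 2 - ε := by
    rw [integral_congr_ae (Filter.Eventually.of_forall hsup),
      integral_indicator_const _ hUm, measureReal_def, hμU,
      ENNReal.toReal_ofReal (by nlinarith), smul_eq_mul]
    field_simp
  refine ⟨by rw [hint]; ring, by linarith, ?_⟩
  intro i
  fin_cases i
  · show ∫ ω, X 0 ω ∂μ = 1
    rw [show (fun ω => X 0 ω) = X 0 from rfl, hX0, integral_indicator_const _ hAm, measureReal_def, hμA,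
      ENNReal.toReal_ofReal hε0.le, smul_eq_mul]
    field_simp
  · show ∫ ω, X 1 ω ∂μ = 1
    rw [show (fun ω => X 1 ω) = X 1 from rfl, hX1, integral_indicator_const _ hBm, measureReal_def, hμB,
      ENNReal.toReal_ofReal hε0.le, smul_eq_mul]
    field_simp
  · show ∫ ω, X 2 ω ∂μ = 1
    simp only [hdet]
    simp
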